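/- Assume additionally that V > 0 and V is non-decreasing on (-∞,0], and that the initial particle gaps satisfy x_{i+1}(0) - xᵢ(0) ≥ m_N/R for all i, where R > 0. Then for the particle system ẋᵢ = v(m_N Σ_{k>i} V(xᵢ - x_k)) with v strictly decreasing, the gaps satisfy x_{i+1}(t) - xᵢ(t) ≥ m_N/R for all t ≥ 0; equivalently the discrete density ρ^N(·,t) is bounded by R uniformly in time. -/

import Mathlib

open scoped BigOperators
open Filter

/-- Discrete maximum principle: if `V > 0` and non-decreasing on `(-∞,0]`, `v` is Lipschitz
and strictly decreasing, and the initial gaps satisfy `x_{i+1}(0) - xᵢ(0) ≥ m_N/R`, then the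
particle system `ẋᵢ = v(m_N ∑_{k>i} V(xᵢ - xₖ))` preserves the gap bound
`x_{i+1}(t) - xᵢ(t) ≥ m_N/R` for all `t ≥ 0` (equivalently, the discrete density is bounded
by `R` uniformly in time). -/
theorem stmt_17 (N : ℕ) (hN : 1 ≤ N) (Lv R lam : ℝ)
    (hLv : 0 ≤ Lv) (hR : 0 < R) (hlam : 0 < lam)
    (v V : ℝ → ℝ)
    (hv : ∀ a b : ℝ, |v a - v b| ≤ Lv * |a - b|)
    (hvdec : StrictAnti v)
    (hVpos : ∀ y : ℝ, y ≤ 0 → 0 < V y)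
    (hVmono : MonotoneOn V (Set.Iic (0:ℝ)))
    (hVsupp : ∀ y : ℝ, 0 < y → V y = 0)
    (hV0 : V 0 = lam)
    (x : ℕ → ℝ → ℝ)
    (hode : ∀ i ≤ N, ∀ t : ℝ, 0 ≤ t →
      HasDerivAt (x i)
        (v ((1 / N : ℝ) * ∑ k ∈ Finset.Ioc i N, V (x i t - x k t))) t)
    (hinit : ∀ i < N, (1 / N : ℝ) / R ≤ x (i + 1) 0 - x i 0) :
    ∀ i < N, ∀ t : ℝ, 0 ≤ t → (1 / N : ℝ) / R ≤ x (i + 1) t - x i t := by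
  have hNR : (0:ℝ) < (N:ℝ) := by exact_mod_cast Nat.pos_of_ne_zero (by omega)
  set c : ℝ := (1 / N : ℝ) / R with hc
  have hcpos : 0 < c := div_pos (by positivity) hR
  by_contra hcon
  push_neg at hcon
  obtain ⟨i0, hi0, t0, ht0, hlt0⟩ := hcon
  set B : Set ℝ := {t | 0 ≤ t ∧ ∃ j, j < N ∧ x (j+1) t - x j t < c} with hB
  have hBne : B.Nonempty := ⟨t0, ht0, i0, hi0, hlt0⟩
  have hBbd : BddBelow B := ⟨0, fun t ht => ht.1⟩
  set T : ℝ := sInf B with hTdef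
  have hT0 : 0 ≤ T := le_csInf hBne (fun t ht => ht.1)
  have hbefore : ∀ t, 0 ≤ t → t < T → ∀ j, j < N → c ≤ x (j+1) t - x j t := by
    intro t ht htT j hj
    by_contra h
    push_neg at h
    exact absurd (csInf_le hBbd ⟨ht, j, hj, h⟩) (not_le.2 htT)
  have hcont : ∀ j, j ≤ N → ContinuousAt (fun t => x j t) T :=
    fun j hj => (hode j hj T hT0).continuousAt
  have hgcont : ∀ j, j < N → ContinuousAt (fun t => x (j+1) t - x j t) T :=
    fun j hj => (hcont (j+1) hj).sub (hcont j hj.le)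
  -- Step A: at time T all gaps are ≥ c
  have hA : ∀ j, j < N → c ≤ x (j+1) T - x j T := by
    intro j hj
    rcases eq_or_lt_of_le hT0 with h0 | hpos
    · rw [← h0]; exact hinit j hj
    · have htend : Tendsto (fun t => x (j+1) t - x j t) (nhdsWithin T (Set.Iio T))
        (nhds (x (j+1) T - x j T)) := (hgcont j hj).tendsto.mono_left nhdsWithin_le_nhds
      refine ge_of_tendsto htend ?_
      filter_upwards [Ioo_mem_nhdsLT_of_mem (Set.mem_Ioc.2 ⟨hpos, le_refl T⟩)] with t ht
      exact hbefore t ht.1.le ht.2 j hj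
  have hTnB : T ∉ B := by
    rintro ⟨-, j, hj, h⟩
    exact absurd (hA j hj) (not_le.2 h)
  -- times in B accumulate at T from the right
  have hfreq : ∃ᶠ t in nhdsWithin T (Set.Ioi T), ∃ j, j < N ∧ x (j+1) t - x j t < c := by
    rw [Filter.frequently_iff]
    intro s hs
    rw [mem_nhdsGT_iff_exists_Ioo_subset] at hs
    obtain ⟨u, hu, hsub⟩ := hs
    obtain ⟨t, htB, htu⟩ := (csInf_lt_iff hBbd hBne).1 hu
    have hTt : T ≤ t := csInf_le hBbd htB
    have hTt' : T < t := lt_of_le_of_ne hTt (by rintro rfl; exact hTnB htB)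
    exact ⟨t, hsub ⟨hTt', htu⟩, htB.2⟩
  -- pigeonhole: a single index j works frequently
  have hfi : ∃ j, j < N ∧ ∃ᶠ t in nhdsWithin T (Set.Ioi T), x (j+1) t - x j t < c := by
    by_contra h
    push_neg at h
    have hev : ∀ᶠ t in nhdsWithin T (Set.Ioi T),
        ∀ j ∈ Finset.range N, ¬(x (j+1) t - x j t < c) := by
      rw [Filter.eventually_all_finset]
      intro j hj
      have := h j (Finset.mem_range.1 hj)
      exact this.mono fun t ht => not_lt.2 ht
    obtain ⟨t, ⟨j, hj, hP⟩, hall⟩ := (hfreq.and_eventually hev).exists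
    exact hall j (Finset.mem_range.2 hj) hP
  obtain ⟨j, hjN, hfj⟩ := hfi
  have hj1N : j + 1 ≤ N := hjN
  -- the gap j at time T equals c
  have htendr : Tendsto (fun t => x (j+1) t - x j t) (nhdsWithin T (Set.Ioi T))
      (nhds (x (j+1) T - x j T)) := (hgcont j hjN).tendsto.mono_left nhdsWithin_le_nhds
  have hle : x (j+1) T - x j T ≤ c := by
    by_contra h
    push_neg at h
    have hev : ∀ᶠ t in nhdsWithin T (Set.Ioi T), c < x (j+1) t - x j t :=
      htendr.eventually (lt_mem_nhds h)
    obtain ⟨t, h1, h2⟩ := (hfj.and_eventually hev).exists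
    exact absurd h2 (not_lt.2 h1.le)
  have heq : x (j+1) T - x j T = c := le_antisymm hle (hA j hjN)
  -- ordering at time T
  have hstep : ∀ m, m < N → x m T ≤ x (m+1) T := by
    intro m hm
    nlinarith [hA m hm, hcpos]
  have hord : ∀ b, b ≤ N → ∀ a, a ≤ b → x a T ≤ x b T := by
    intro b
    induction b with
    | zero => intro _ a ha; rw [Nat.le_zero.1 ha]
    | succ b ih =>
      intro hb a ha
      rcases Nat.lt_succ_iff_lt_or_eq.1 (Nat.lt_succ_of_le ha) with h | h
      · exact le_trans (ih (by omega) a (by omega)) (hstep b (by omega))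
      · rw [h]
  -- key sum comparison
  set S1 : ℝ := ∑ k ∈ Finset.Ioc (j+1) N, V (x (j+1) T - x k T) with hS1
  set S2 : ℝ := ∑ k ∈ Finset.Ioc j N, V (x j T - x k T) with hS2
  have hN1 : N - 1 + 1 = N := by omega
  have hreindex : S1 = ∑ m ∈ Finset.Ioc j (N-1), V (x (j+1) T - x (m+1) T) := by
    rw [hS1]
    rw [show Finset.Ioc (j+1) N = (Finset.Ioc j (N-1)).map
        (addRightEmbedding 1) from ?_]
    · rw [Finset.sum_map]; rfl
    · rw [Finset.map_add_right_Ioc, hN1]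
  have hterm : ∀ m ∈ Finset.Ioc j (N-1),
      V (x (j+1) T - x (m+1) T) ≤ V (x j T - x m T) := by
    intro m hm
    rw [Finset.mem_Ioc] at hm
    have hmN : m < N := by omega
    have h1 : x (j+1) T - x (m+1) T ≤ x j T - x m T := by
      have := hA m hmN
      linarith [heq]
    have h2 : x j T - x m T ≤ 0 := by
      have := hord m (by omega) j (by omega); linarith
    have h3 : x (j+1) T - x (m+1) T ≤ 0 := by
      have := hord (m+1) (by omega) (j+1) (by omega); linarith
    exact hVmono (Set.mem_Iic.2 h3) (Set.mem_Iic.2 h2) h1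
  have hsplit : S2 = (∑ m ∈ Finset.Ioc j (N-1), V (x j T - x m T)) + V (x j T - x N T) := by
    rw [hS2]
    have := Finset.sum_Ioc_succ_top (f := fun k => V (x j T - x k T))
      (a := j) (b := N-1) (by omega)
    rw [hN1] at this
    exact this
  have hVN : 0 < V (x j T - x N T) := by
    apply hVpos
    have := hord N le_rfl j hjN.le
    linarith
  have hS1S2 : S1 < S2 := by
    rw [hreindex, hsplit]
    have := Finset.sum_le_sum hterm
    linarith
  -- derivative of the gap at T is positive
  have harg : (1 / N : ℝ) * S1 < (1 / N : ℝ) * S2 :=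
    mul_lt_mul_of_pos_left hS1S2 (by positivity)
  have hd : 0 < v ((1 / N : ℝ) * S1) - v ((1 / N : ℝ) * S2) :=
    sub_pos.2 (hvdec harg)
  have hder : HasDerivAt (fun t => x (j+1) t - x j t)
      (v ((1 / N : ℝ) * S1) - v ((1 / N : ℝ) * S2)) T := by
    rw [hS1, hS2]
    exact (hode (j+1) hj1N T hT0).sub (hode j hjN.le T hT0)
  have hslope := hasDerivAt_iff_tendsto_slope.1 hder
  have hslope' : Tendsto (slope (fun t => x (j+1) t - x j t) T)
      (nhdsWithin T (Set.Ioi T)) (nhds (v ((1 / N : ℝ) * S1) - v ((1 / N : ℝ) * S2))) :=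
    hslope.mono_left (nhdsWithin_mono T (fun t ht => (ne_of_lt ht).symm))
  have hev1 : ∀ᶠ t in nhdsWithin T (Set.Ioi T),
      0 < slope (fun t => x (j+1) t - x j t) T t :=
    hslope'.eventually (lt_mem_nhds hd)
  have hev2 : ∀ᶠ t in nhdsWithin T (Set.Ioi T), T < t := eventually_mem_nhdsWithin
  obtain ⟨t, hlt', hpos', hTt⟩ := (hfj.and_eventually (hev1.and hev2)).exists
  rw [slope_def_field] at hpos'
  have hne : t - T ≠ 0 := sub_ne_zero.2 (ne_of_gt hTt)
  have h4 := mul_pos hpos' (sub_pos.2 hTt)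
  rw [div_mul_cancel₀ _ hne] at h4
  have : c < x (j+1) t - x j t := by linarith [heq]
  exact absurd hlt' (not_lt.2 this.le)
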